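/- For all integers t ≥ 2 and all partitions λ, the quantity |λ| − ∑_{j≥0} |β_j(t; λ)| is a nonnegative integer divisible by t − 1. -/

import Mathlib

open PowerSeries

/-- The type of all integer partitions (of any size). -/
abbrev Ptn : Type := Σ n : ℕ, Nat.Partition n

/-- Build a partition from an arbitrary multiset of naturals by discarding the zeros. -/
def ptnOfMultiset (m : Multiset ℕ) : Ptn :=
  ⟨(m.filter (fun x => 0 < x)).sum,
   ⟨m.filter (fun x => 0 < x), fun hi => (Multiset.mem_filter.mp hi).2, rfl⟩⟩

/-- The `i`-th largest part of a partition (0-indexed), or `0` if there is none. -/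
def partAt (p : Ptn) (i : ℕ) : ℕ := ((p.2.parts.sort (· ≤ ·)).reverse).getD i 0

/-- The beta-set (set of first-column hook lengths) of `p`, computed with `K` beads:
`{λ_i + (K - 1 - i) : 0 ≤ i < K}`. -/
def betaSet (p : Ptn) (K : ℕ) : Finset ℕ :=
  (Finset.range K).image (fun i => partAt p i + (K - 1 - i))

/-- The partition whose beta-set (for `S.card` beads) is the finite set `S`. -/
def ptnOfBetaSet (S : Finset ℕ) : Ptn :=
  ptnOfMultiset (((S.sort (· ≤ ·)).mapIdx (fun i b => b - i) : List ℕ) : Multiset ℕ)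

/-- A normalized number of beads for the `t`-abacus of `p`: divisible by `t` and
at least the number of parts, which makes the `t`-quotient labelling canonical. -/
def beads (t : ℕ) (p : Ptn) : ℕ := t * p.2.parts.card

/-- The `t`-core of a partition, via the abacus: push all beads down their runners. -/
def core (t : ℕ) (p : Ptn) : Ptn :=
  ptnOfBetaSet ((Finset.range t).biUnion (fun r =>
    (Finset.range (((betaSet p (beads t p)).filter (fun b => b % t = r)).card)).image
      (fun j => r + t * j)))

/-- The `t`-quotient of a partition, via the abacus: the `r`-th component is read off
from the beads on runner `r`. -/
def quotient (t : ℕ) (p : Ptn) : List Ptn :=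
  (List.range t).map (fun r =>
    ptnOfBetaSet (((betaSet p (beads t p)).filter (fun b => b % t = r)).image (fun b => b / t)))

/-- Row `j` of the `t`-core pre-tower of `p`: `α_0 = [p]`, and `α_{j+1}` is obtained by
concatenating the `t`-quotients of the partitions in `α_j`. -/
def preTower (t : ℕ) (p : Ptn) : ℕ → List Ptn
  | 0 => [p]
  | j + 1 => (preTower t p j).flatMap (quotient t)

/-- Row `j` of the `t`-core tower of `p`: the `t`-cores of the partitions in `α_j`. -/
def towerRow (t : ℕ) (p : Ptn) (j : ℕ) : List Ptn := (preTower t p j).map (core t)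

/-- The total size of a row: the sum of the sizes of its partitions. -/
def rowSize (l : List Ptn) : ℕ := (l.map (fun q => q.1)).sum

/-- The formal power series `(q^m; q^m)_∞ ^ s`, defined coefficientwise (the `n`-th
coefficient of the infinite product agrees with that of the finite product
`∏_{k=1}^n (1 - q^{mk})^s`). -/
noncomputable def eulerProd (m s : ℕ) : PowerSeries ℚ :=
  PowerSeries.mk fun n =>
    PowerSeries.coeff (R := ℚ) n (∏ k ∈ Finset.Icc 1 n, (1 - PowerSeries.X ^ (m * k)) ^ s)

/-- The series `G(q^m) = ∑_{k ≥ 1} σ_1(k) q^{mk}`. -/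
noncomputable def Gm (m : ℕ) : PowerSeries ℚ :=
  PowerSeries.mk fun n => if m ∣ n ∧ n ≠ 0 then (∑ d ∈ (n / m).divisors, (d : ℚ)) else 0
/-- The number of cells in column `j` (0-indexed) of the Young diagram of `p`. -/
def colLen (p : Ptn) (j : ℕ) : ℕ := Multiset.countP (fun a => j < a) p.2.parts

/-- The hook length of the cell in row `i`, column `j` (0-indexed) of `p`:
arm length + leg length + 1. -/
def hookLength (p : Ptn) (i j : ℕ) : ℕ := (partAt p i - j) + (colLen p j - (i + 1))

/-- A partition is a `t`-core if no hook length of a cell of its Young diagram is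
divisible by `t`. -/
def IsTCore (t : ℕ) (p : Ptn) : Prop :=
  ∀ i j : ℕ, j < partAt p i → ¬ t ∣ hookLength p i j

/-- A partition is a generalized `(j,t)`-core if every partition in row `j+1` of its
`t`-core pre-tower is empty. -/
def IsGenCore (t j : ℕ) (p : Ptn) : Prop :=
  ∀ q ∈ preTower t p (j + 1), q.1 = 0

/-- `T_{j,t}(q) = ∑_{λ ∈ P} |β_j(t;λ)| q^{|λ|}`. -/
noncomputable def Tgen (t j : ℕ) : PowerSeries ℚ :=
  PowerSeries.mk fun n => ∑ p : Nat.Partition n, (rowSize (towerRow t ⟨n, p⟩ j) : ℚ)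

/-- The number of partitions of `n`. -/
noncomputable def pfun (n : ℕ) : ℕ := Nat.card (Nat.Partition n)

/-- `a_t(n)`: the sum of the sizes of the `t`-cores of all partitions of `n`. -/
noncomputable def acore (t n : ℕ) : ℕ := ∑ p : Nat.Partition n, (core t ⟨n, p⟩).1

/-- The number of `t`-regular partitions of `n` (no part divisible by `t`). -/
noncomputable def preg (t n : ℕ) : ℕ :=
  Nat.card {p : Nat.Partition n // ∀ x ∈ p.parts, ¬ t ∣ x}
/-! ### Auxiliary lemmas for `defect_integral` -/

lemma ptnOfMultiset_size (m : Multiset ℕ) : (ptnOfMultiset m).1 = m.sum := by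
  show (m.filter (fun x => 0 < x)).sum = m.sum
  conv_rhs => rw [← Multiset.filter_add_not (fun x => 0 < x) m]
  rw [Multiset.sum_add, Multiset.sum_eq_zero (s := m.filter (fun x => ¬ 0 < x)) ?_, add_zero]
  intro x hx
  have := (Multiset.mem_filter.mp hx).2
  omega

lemma sum_getD (l : List ℕ) (K : ℕ) (h : l.length ≤ K) :
    ∑ i ∈ Finset.range K, l.getD i 0 = l.sum := by
  induction l generalizing K with
  | nil => simp
  | cons a l ih =>
      simp only [List.length_cons] at h
      obtain ⟨K', rfl⟩ : ∃ K', K = K' + 1 := ⟨K - 1, by omega⟩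
      rw [Finset.sum_range_succ']
      simp only [List.getD_cons_succ, List.getD_cons_zero, List.sum_cons]
      rw [ih K' (by omega)]; ring

lemma le_getElem_of_sorted (l : List ℕ) (hl : l.Pairwise (· < ·)) :
    ∀ i (h : i < l.length), i ≤ l[i] := by
  intro i
  induction i with
  | zero => intro h; exact Nat.zero_le _
  | succ i ih =>
      intro h
      have h1 : i < l.length := by omega
      have h2 := ih h1
      have := List.Pairwise.rel_get_of_lt hl (a := ⟨i, h1⟩) (b := ⟨i+1, h⟩) (by simp)
      simp only [List.get_eq_getElem] at this
      omega

lemma ptnOfBetaSet_size (S : Finset ℕ) :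
    (ptnOfBetaSet S).1 + ∑ i ∈ Finset.range S.card, i = ∑ b ∈ S, b := by
  set L := S.sort (· ≤ ·) with hL
  have hlen : L.length = S.card := Finset.length_sort _
  have hsorted : L.Pairwise (· < ·) := (Finset.sortedLT_sort S).pairwise
  have hsum : L.sum = ∑ b ∈ S, b := by
    calc L.sum = ((L : List ℕ) : Multiset ℕ).sum := rfl
      _ = S.val.sum := by rw [hL, Finset.sort_eq]
      _ = ∑ b ∈ S, b := by rw [Finset.sum]; simp
  rw [ptnOfBetaSet, ptnOfMultiset_size]
  have : (↑(L.mapIdx (fun i b => b - i)) : Multiset ℕ).sum = (L.mapIdx (fun i b => b - i)).sum := rfl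
  rw [this, ← sum_getD _ (L.mapIdx (fun i b => b - i)).length le_rfl]
  have hlen2 : (L.mapIdx (fun i b => b - i)).length = S.card := by
    rw [List.length_mapIdx, hlen]
  rw [hlen2, ← Finset.sum_add_distrib, ← hsum, ← sum_getD L S.card (le_of_eq hlen)]
  apply Finset.sum_congr rfl
  intro i hi
  have hiL : i < L.length := by rw [hlen]; exact Finset.mem_range.mp hi
  have hiM : i < (L.mapIdx (fun i b => b - i)).length := by rw [List.length_mapIdx]; exact hiL
  rw [List.getD_eq_getElem _ _ hiM, List.getD_eq_getElem _ _ hiL, List.getElem_mapIdx]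
  have := le_getElem_of_sorted L hsorted i hiL
  omega

lemma partAt_antitone (p : Ptn) : ∀ {i j : ℕ}, i ≤ j → partAt p j ≤ partAt p i := by
  intro i j hij
  unfold partAt
  set l := (p.2.parts.sort (· ≤ ·)).reverse with hl
  by_cases hj : j < l.length
  · have hi : i < l.length := lt_of_le_of_lt hij hj
    rw [List.getD_eq_getElem _ _ hj, List.getD_eq_getElem _ _ hi]
    have hs : l.Pairwise (· ≥ ·) := by
      rw [hl]
      exact List.pairwise_reverse.mpr (by exact Multiset.pairwise_sort _ (· ≤ ·))
    exact List.Pairwise.rel_get_of_le hs (a := ⟨i, hi⟩) (b := ⟨j, hj⟩) hij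
  · rw [List.getD_eq_default _ _ (by omega)]
    exact Nat.zero_le _

lemma betaSet_injOn (p : Ptn) (K : ℕ) : Set.InjOn (fun i => partAt p i + (K - 1 - i))
    (Finset.range K : Set ℕ) := by
  have key : ∀ i j : ℕ, i < j → j < K →
      partAt p j + (K - 1 - j) < partAt p i + (K - 1 - i) := by
    intro i j hij hjK
    have h1 := partAt_antitone p (le_of_lt hij)
    omega
  intro i hi j hj h
  simp only [Finset.coe_range, Set.mem_Iio] at hi hj
  simp only at h
  rcases lt_trichotomy i j with h'|h'|h'
  · exact absurd h (by have := key i j h' hj; omega)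
  · exact h'
  · exact absurd h (by have := key j i h' hi; omega)

lemma betaSet_card (p : Ptn) (K : ℕ) : (betaSet p K).card = K := by
  rw [betaSet, Finset.card_image_of_injOn (betaSet_injOn p K), Finset.card_range]

lemma sum_partAt (p : Ptn) (K : ℕ) (h : p.2.parts.card ≤ K) :
    ∑ i ∈ Finset.range K, partAt p i = p.1 := by
  unfold partAt
  rw [sum_getD _ _ (by simpa using h)]
  rw [List.sum_reverse]
  calc (p.2.parts.sort (· ≤ ·)).sum = ((p.2.parts.sort (· ≤ ·) : List ℕ) : Multiset ℕ).sum := rfl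
    _ = p.2.parts.sum := by rw [Multiset.sort_eq]
    _ = p.1 := p.2.parts_sum

lemma betaSet_sum (p : Ptn) (K : ℕ) (h : p.2.parts.card ≤ K) :
    ∑ b ∈ betaSet p K, b = p.1 + ∑ i ∈ Finset.range K, i := by
  rw [betaSet, Finset.sum_image (fun i hi j hj => betaSet_injOn p K (by simpa using hi) (by simpa using hj))]
  rw [Finset.sum_add_distrib, sum_partAt p K h]
  congr 1
  rw [← Finset.sum_range_reflect]
  apply Finset.sum_congr rfl
  intro i hi
  simp only [Finset.mem_range] at hi
  omega

lemma list_map_range_sum (t : ℕ) (g : ℕ → ℕ) :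
    ((List.range t).map g).sum = ∑ r ∈ Finset.range t, g r := by
  rw [← Multiset.sum_coe, ← Multiset.map_coe]
  rfl

/-- The key abacus identity: `|p| = |core_t p| + t * (total size of the t-quotient)`. -/
lemma core_quotient (t : ℕ) (ht : 2 ≤ t) (p : Ptn) :
    (core t p).1 + t * ((quotient t p).map (fun q => q.1)).sum = p.1 := by
  have ht0 : 0 < t := by omega
  set K := beads t p with hK
  have hcard : p.2.parts.card ≤ K := by
    rw [hK, beads]
    calc p.2.parts.card = 1 * p.2.parts.card := (one_mul _).symm
      _ ≤ t * p.2.parts.card := Nat.mul_le_mul_right _ (by omega)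
  set B := betaSet p K with hB
  have hBcard : B.card = K := betaSet_card p K
  have hBsum : ∑ b ∈ B, b = p.1 + ∑ i ∈ Finset.range K, i := betaSet_sum p K hcard
  set n : ℕ → ℕ := fun r => (B.filter (fun b => b % t = r)).card with hn
  have hfib : ∀ b ∈ B, b % t ∈ Finset.range t :=
    fun b _ => Finset.mem_range.mpr (Nat.mod_lt b ht0)
  have hKsum : ∑ r ∈ Finset.range t, n r = K := by
    rw [← hBcard]
    exact (Finset.card_eq_sum_card_fiberwise hfib).symm
  set Score : Finset ℕ := (Finset.range t).biUnion (fun r =>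
    (Finset.range (n r)).image (fun j => r + t * j)) with hScore
  have hmem : ∀ r < t, ∀ x ∈ (Finset.range (n r)).image (fun j => r + t * j), x % t = r := by
    intro r hr x hx
    obtain ⟨j, _, rfl⟩ := Finset.mem_image.mp hx
    rw [Nat.add_mul_mod_self_left, Nat.mod_eq_of_lt hr]
  have hdisj : ∀ r ∈ Finset.range t, ∀ r' ∈ Finset.range t, r ≠ r' →
      Disjoint ((Finset.range (n r)).image (fun j => r + t * j))
        ((Finset.range (n r')).image (fun j => r' + t * j)) := by
    intro r hr r' hr' hne
    rw [Finset.disjoint_left]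
    intro x hx hx'
    have h1 := hmem r (Finset.mem_range.mp hr) x hx
    have h2 := hmem r' (Finset.mem_range.mp hr') x hx'
    omega
  have hinj : ∀ r : ℕ, ∀ j j' : ℕ, r + t * j = r + t * j' → j = j' := by
    intro r j j' h
    exact Nat.eq_of_mul_eq_mul_left ht0 (by omega)
  have hScoreCard : Score.card = K := by
    rw [hScore, Finset.card_biUnion hdisj, ← hKsum]
    apply Finset.sum_congr rfl
    intro r _
    rw [Finset.card_image_of_injOn (fun a _ b _ hab => hinj r a b hab), Finset.card_range]
  have hScoreSum : ∑ b ∈ Score, b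
      = ∑ r ∈ Finset.range t, (n r * r + t * ∑ j ∈ Finset.range (n r), j) := by
    rw [hScore, Finset.sum_biUnion]
    · apply Finset.sum_congr rfl
      intro r _
      rw [Finset.sum_image (fun a _ b _ hab => hinj r a b hab)]
      rw [Finset.sum_add_distrib, Finset.sum_const, Finset.card_range, Finset.mul_sum]
      simp [mul_comm]
    · intro r hr r' hr' hne
      exact hdisj r hr r' hr' hne
  have hcoreSize : (core t p).1 + ∑ i ∈ Finset.range K, i
      = ∑ r ∈ Finset.range t, (n r * r + t * ∑ j ∈ Finset.range (n r), j) := by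
    have h := ptnOfBetaSet_size Score
    rw [hScoreCard] at h
    rw [← hScoreSum, ← h]
    rfl
  have hquotInj : ∀ r : ℕ, Set.InjOn (fun b => b / t)
      ((B.filter (fun b => b % t = r)) : Set ℕ) := by
    intro r b hb b' hb' h
    simp only [Finset.coe_filter, Set.mem_setOf_eq] at hb hb'
    simp only at h
    calc b = t * (b / t) + b % t := (Nat.div_add_mod b t).symm
      _ = t * (b' / t) + b' % t := by rw [h, hb.2, hb'.2]
      _ = b' := Nat.div_add_mod b' t
  have hquotSum : ((quotient t p).map (fun q => q.1)).sum
      = ∑ r ∈ Finset.range t, (ptnOfBetaSet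
          ((B.filter (fun b => b % t = r)).image (fun b => b / t))).1 := by
    rw [quotient, List.map_map]
    exact list_map_range_sum t _
  have hquotSize : ∀ r ∈ Finset.range t,
      (ptnOfBetaSet ((B.filter (fun b => b % t = r)).image (fun b => b / t))).1
        + ∑ i ∈ Finset.range (n r), i
        = ∑ b ∈ B.filter (fun b => b % t = r), b / t := by
    intro r hr
    set Qr : Finset ℕ := (B.filter (fun b => b % t = r)).image (fun b => b / t) with hQr
    have hQrCard : Qr.card = n r := by
      rw [hQr, Finset.card_image_of_injOn (hquotInj r)]
    have hQrSum : ∑ b ∈ Qr, b = ∑ b ∈ B.filter (fun b => b % t = r), b / t := by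
      rw [hQr, Finset.sum_image (fun a ha b hb hab => hquotInj r (by simpa using ha) (by simpa using hb) hab)]
    have h := ptnOfBetaSet_size Qr
    rw [hQrCard, hQrSum] at h
    exact h
  have hBfiber : ∑ b ∈ B, b = ∑ r ∈ Finset.range t,
      (t * ∑ b ∈ B.filter (fun b => b % t = r), b / t + n r * r) := by
    rw [← Finset.sum_fiberwise_of_maps_to hfib (fun b => b)]
    apply Finset.sum_congr rfl
    intro r hr
    have e : ∑ b ∈ B.filter (fun b => b % t = r), b
        = ∑ b ∈ B.filter (fun b => b % t = r), (t * (b / t) + r) := by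
      apply Finset.sum_congr rfl
      intro b hb
      have hbr : b % t = r := by simpa using (Finset.mem_filter.mp hb).2
      conv_lhs => rw [← Nat.div_add_mod b t, hbr]
    rw [e, Finset.sum_add_distrib, Finset.sum_const, smul_eq_mul, Finset.mul_sum]
  have key : p.1 + ∑ i ∈ Finset.range K, i
      = ((core t p).1 + t * ((quotient t p).map (fun q => q.1)).sum) + ∑ i ∈ Finset.range K, i := by
    calc p.1 + ∑ i ∈ Finset.range K, i = ∑ b ∈ B, b := hBsum.symm
      _ = ∑ r ∈ Finset.range t, (t * ∑ b ∈ B.filter (fun b => b % t = r), b / t + n r * r) :=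
          hBfiber
      _ = ∑ r ∈ Finset.range t,
            (t * (ptnOfBetaSet ((B.filter (fun b => b % t = r)).image (fun b => b / t))).1
              + (n r * r + t * ∑ i ∈ Finset.range (n r), i)) := by
          apply Finset.sum_congr rfl
          intro r hr
          rw [← hquotSize r hr, Nat.mul_add]
          ring
      _ = t * (∑ r ∈ Finset.range t,
              (ptnOfBetaSet ((B.filter (fun b => b % t = r)).image (fun b => b / t))).1)
            + ∑ r ∈ Finset.range t, (n r * r + t * ∑ i ∈ Finset.range (n r), i) := by
          rw [Finset.sum_add_distrib, Finset.mul_sum]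
      _ = ((core t p).1 + t * ((quotient t p).map (fun q => q.1)).sum)
            + ∑ i ∈ Finset.range K, i := by
          rw [← hquotSum, ← hcoreSize]
          ring
  omega

lemma rowSize_list (t : ℕ) (ht : 2 ≤ t) (l : List Ptn) :
    rowSize (l.map (core t)) + t * rowSize (l.flatMap (quotient t)) = rowSize l := by
  induction l with
  | nil => simp [rowSize]
  | cons a l ih =>
      simp only [List.map_cons, List.flatMap_cons, rowSize, List.sum_cons, List.map_append,
        List.sum_append] at *
      have h := core_quotient t ht a
      rw [Nat.mul_add]
      omega

lemma tower_rec (t : ℕ) (ht : 2 ≤ t) (p : Ptn) (j : ℕ) :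
    rowSize (towerRow t p j) + t * rowSize (preTower t p (j+1)) = rowSize (preTower t p j) := by
  rw [towerRow]
  exact rowSize_list t ht (preTower t p j)

/-- `|λ| - ∑_{j≥0} |β_j(t;λ)|` is a nonnegative integer divisible by `t-1`. -/
theorem defect_integral (t : ℕ) (ht : 2 ≤ t) (p : Ptn) :
    0 ≤ (p.1 : ℤ) - ∑' j : ℕ, (rowSize (towerRow t p j) : ℤ) ∧
    ((t : ℤ) - 1) ∣ ((p.1 : ℤ) - ∑' j : ℕ, (rowSize (towerRow t p j) : ℤ)) := by
  have ht0 : 0 < t := by omega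
  set c : ℕ → ℕ := fun j => rowSize (towerRow t p j) with hc
  set s : ℕ → ℕ := fun j => rowSize (preTower t p j) with hs
  have hrec : ∀ j, c j + t * s (j+1) = s j := fun j => tower_rec t ht p j
  have hs0 : s 0 = p.1 := by simp [hs, preTower, rowSize]
  have hpow : ∀ j, 2^j * s j ≤ p.1 := by
    intro j
    induction j with
    | zero => simp [hs0]
    | succ j ih =>
        have h1 := hrec j
        have h2 : 2 * s (j+1) ≤ s j := by
          calc 2 * s (j+1) ≤ t * s (j+1) := Nat.mul_le_mul_right _ ht
            _ ≤ s j := by omega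
        calc 2^(j+1) * s (j+1) = 2^j * (2 * s (j+1)) := by ring
          _ ≤ 2^j * s j := Nat.mul_le_mul_left _ h2
          _ ≤ p.1 := ih
  have hszero : ∀ j, p.1 ≤ j → s j = 0 := by
    intro j hj
    by_contra h
    have h1 : 1 ≤ s j := Nat.one_le_iff_ne_zero.mpr h
    have h2 : 2^j ≤ 2^j * s j := Nat.le_mul_of_pos_right _ (by omega)
    have h3 : j < 2^j := Nat.lt_two_pow_self
    have := hpow j
    omega
  have hczero : ∀ j, p.1 ≤ j → c j = 0 := by
    intro j hj
    have h1 := hrec j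
    have h2 := hszero j hj
    omega
  set N := p.1 with hN
  have hmain : ∀ M : ℕ, p.1 = ∑ j ∈ Finset.range M, t^j * c j + t^M * s M := by
    intro M
    induction M with
    | zero => simp [hs0, hN]
    | succ M ih =>
        rw [Finset.sum_range_succ]
        have h1 := hrec M
        have : t^(M+1) * s (M+1) + t^M * c M = t^M * s M := by
          have : t^M * (c M + t * s (M+1)) = t^M * s M := by rw [h1]
          rw [Nat.mul_add] at this
          ring_nf at this ⊢
          omega
        omega
  have hfin : p.1 = ∑ j ∈ Finset.range N, t^j * c j := by
    have := hmain N
    rw [hszero N le_rfl, Nat.mul_zero, Nat.add_zero] at this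
    exact this
  have htsum : (∑' j : ℕ, (c j : ℤ)) = ∑ j ∈ Finset.range N, (c j : ℤ) := by
    apply tsum_eq_sum
    intro b hb
    rw [hczero b (le_of_not_gt (fun h => hb (Finset.mem_range.mpr h)))]
    simp
  have hcast : (p.1 : ℤ) = ∑ j ∈ Finset.range N, (t : ℤ)^j * (c j : ℤ) := by
    rw [hfin]
    push_cast
    rfl
  have hkey : (p.1 : ℤ) - ∑' j : ℕ, (c j : ℤ)
      = ∑ j ∈ Finset.range N, ((t : ℤ)^j - 1) * (c j : ℤ) := by
    rw [htsum, hcast, ← Finset.sum_sub_distrib]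
    apply Finset.sum_congr rfl
    intro j _
    ring
  constructor
  · rw [hkey]
    apply Finset.sum_nonneg
    intro j _
    have h1 : (1 : ℤ) ≤ (t : ℤ)^j := one_le_pow₀ (by exact_mod_cast ht0)
    have h2 : (0 : ℤ) ≤ (c j : ℤ) := Int.natCast_nonneg _
    nlinarith
  · rw [hkey]
    apply Finset.dvd_sum
    intro j _
    exact Dvd.dvd.mul_right (by simpa using sub_dvd_pow_sub_pow (t : ℤ) 1 j) _
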